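/- Anodyne morphisms in a tribe are stable under pullback: given fibrations x₀ ↠ a, x₁ ↠ a, y₀ ↠ b, y₁ ↠ b, an anodyne morphism y₀ → y₁ over b, a morphism a → b, a morphism x₀ → x₁ over a, and compatible pullback squares exhibiting x₀ = a ×_b y₀ and x₁ = a ×_b y₁, the morphism x₀ → x₁ is anodyne. -/

import Mathlib

open CategoryTheory CategoryTheory.Limits

universe v u

namespace Paper

variable {T : Type u} [Category.{v} T]

/-- A morphism is anodyne (w.r.t. a class of fibrations) if it has the left
lifting property against all fibrations. -/
def Anodyne (Fib : MorphismProperty T) : MorphismProperty T :=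
  fun _ _ i => ∀ ⦃u w : T⦄ (g : u ⟶ w), Fib g → HasLiftingProperty i g

/-- A tribe structure on a category `T`. -/
structure TribeStruct (T : Type u) [Category.{v} T] where
  /-- fibrations -/
  Fib : MorphismProperty T
  fib_id : ∀ x : T, Fib (𝟙 x)
  fib_comp : ∀ {x y z : T} (f : x ⟶ y) (g : y ⟶ z), Fib f → Fib g → Fib (f ≫ g)
  /-- (T1): terminal object, all objects fibrant -/
  term : T
  isTerminal : IsTerminal term
  all_fibrant : ∀ x : T, Fib (isTerminal.from x)
  /-- (T2): pullbacks along fibrations exist and fibrations are stable -/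
  pullback_exists : ∀ {x y z : T} (f : x ⟶ z) (g : y ⟶ z), Fib g → HasPullback f g
  fib_stable : ∀ {p x y z : T} {fst : p ⟶ x} {snd : p ⟶ y} {f : x ⟶ z} {g : y ⟶ z},
    IsPullback fst snd f g → Fib g → Fib fst
  /-- (T3): factorization as anodyne followed by fibration -/
  factor : ∀ {x y : T} (f : x ⟶ y), ∃ (z : T) (i : x ⟶ z) (q : z ⟶ y),
    Anodyne Fib i ∧ Fib q ∧ i ≫ q = f
  /-- (T4): anodyne morphisms are stable under pullback along fibrations -/
  anodyne_stable : ∀ {p x y z : T} {fst : p ⟶ x} {snd : p ⟶ y} {f : x ⟶ z} {g : y ⟶ z},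
    IsPullback fst snd f g → Anodyne Fib f → Fib g → Anodyne Fib snd

/-- A path object for `x` in a tribe: a factorization of the diagonal
`x → x × x` as an anodyne morphism followed by a fibration (the product is
presented by an explicit binary product cone). -/
structure PathObject (R : TribeStruct T) (x : T) where
  P : T
  σ : x ⟶ P
  π₀ : P ⟶ x
  π₁ : P ⟶ x
  σ_anodyne : Anodyne R.Fib σ
  σ_π₀ : σ ≫ π₀ = 𝟙 x
  σ_π₁ : σ ≫ π₁ = 𝟙 x
  prod : T
  p₀ : prod ⟶ x
  p₁ : prod ⟶ x
  isProd : IsLimit (BinaryFan.mk p₀ p₁)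
  π : P ⟶ prod
  π_p₀ : π ≫ p₀ = π₀
  π_p₁ : π ≫ p₁ = π₁
  π_fib : R.Fib π

/-- Homotopy of morphisms in a tribe. -/
def Homotopic (R : TribeStruct T) {x y : T} (f g : x ⟶ y) : Prop :=
  ∃ (Po : PathObject R y) (H : x ⟶ Po.P), H ≫ Po.π₀ = f ∧ H ≫ Po.π₁ = g

/-- Homotopy equivalences in a tribe. -/
def IsHtpyEquiv (R : TribeStruct T) {x y : T} (f : x ⟶ y) : Prop :=
  ∃ g : y ⟶ x, Homotopic R (f ≫ g) (𝟙 x) ∧ Homotopic R (g ≫ f) (𝟙 y)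

/-- Homotopy equivalences (= weak equivalences) of a tribe as a morphism property. -/
def hW (R : TribeStruct T) : MorphismProperty T :=
  fun _ _ f => IsHtpyEquiv R f

end Paper


section Aux

open Paper

variable {T : Type u} [Category.{v} T]

/-- Anodyne morphisms are closed under composition. -/
lemma anodyne_comp {Fib : MorphismProperty T} {x y z : T} {f : x ⟶ y} {g : y ⟶ z}
    (hf : Anodyne Fib f) (hg : Anodyne Fib g) : Anodyne Fib (f ≫ g) := by
  intro u w p hp
  haveI := hf p hp
  haveI := hg p hp
  infer_instance

/-- Anodyne morphisms in a tribe are split monomorphisms. -/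
lemma anodyne_retraction (R : TribeStruct T) {x y : T} {f : x ⟶ y}
    (hf : Anodyne R.Fib f) : ∃ r : y ⟶ x, f ≫ r = 𝟙 x := by
  haveI := hf (R.isTerminal.from x) (R.all_fibrant x)
  have sq : CommSq (𝟙 x) f (R.isTerminal.from x) (R.isTerminal.from y) :=
    ⟨R.isTerminal.hom_ext _ _⟩
  exact ⟨sq.lift, sq.fac_left⟩

/-- Cancellation: if `g` and `f ≫ g` are anodyne, then so is `f`. -/
lemma anodyne_cancel (R : TribeStruct T) {A B C : T} {f : A ⟶ B} {g : B ⟶ C}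
    (hg : Anodyne R.Fib g) (hfg : Anodyne R.Fib (f ≫ g)) : Anodyne R.Fib f := by
  obtain ⟨r, hr⟩ := anodyne_retraction R hg
  intro X Y p hp
  constructor
  intro u v sq
  haveI := R.pullback_exists v p hp
  have pb : IsPullback (pullback.fst v p) (pullback.snd v p) v p :=
    IsPullback.of_hasPullback v p
  have hfst : R.Fib (pullback.fst v p) := R.fib_stable pb hp
  set aP : A ⟶ pullback v p := pullback.lift f u sq.w.symm with haP
  haveI := hfg (pullback.fst v p) hfst
  have sq2 : CommSq aP (f ≫ g) (pullback.fst v p) r :=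
    ⟨by rw [haP, pullback.lift_fst, Category.assoc, hr, Category.comp_id]⟩
  refine CommSq.HasLift.mk' ⟨g ≫ sq2.lift ≫ pullback.snd v p, ?_, ?_⟩
  · have h1 : f ≫ g ≫ sq2.lift = aP := by
      rw [← Category.assoc]; exact sq2.fac_left
    calc f ≫ (g ≫ sq2.lift ≫ pullback.snd v p)
        = (f ≫ g ≫ sq2.lift) ≫ pullback.snd v p := by simp [Category.assoc]
      _ = aP ≫ pullback.snd v p := by rw [h1]
      _ = u := by rw [haP]; exact pullback.lift_snd _ _ _
  · have h2 : sq2.lift ≫ pullback.fst v p = r := sq2.fac_right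
    calc (g ≫ sq2.lift ≫ pullback.snd v p) ≫ p
        = g ≫ sq2.lift ≫ pullback.snd v p ≫ p := by simp [Category.assoc]
      _ = g ≫ sq2.lift ≫ pullback.fst v p ≫ v := by rw [pullback.condition]
      _ = g ≫ (sq2.lift ≫ pullback.fst v p) ≫ v := by simp [Category.assoc]
      _ = g ≫ r ≫ v := by rw [h2]
      _ = v := by rw [← Category.assoc, hr, Category.id_comp]

end Aux

open Paper in
/-- Anodyne morphisms in a tribe are stable under pullback:
given fibrations `x₀ ↠ a`, `x₁ ↠ a`, `y₀ ↠ b`, `y₁ ↠ b`, an anodyne morphism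
`j : y₀ → y₁` over `b`, a morphism `σ : a → b`, a morphism `i : x₀ → x₁` over `a`
and compatible pullback squares exhibiting `x₀ = a ×_b y₀` and `x₁ = a ×_b y₁`,
the morphism `i` is anodyne. -/
theorem anodyne_pullback_stable {T : Type u} [Category.{v} T] (R : Paper.TribeStruct T)
    {x₀ x₁ a y₀ y₁ b : T}
    (p₀ : x₀ ⟶ a) (p₁ : x₁ ⟶ a) (q₀ : y₀ ⟶ b) (q₁ : y₁ ⟶ b)
    (hp₀ : R.Fib p₀) (hp₁ : R.Fib p₁) (hq₀ : R.Fib q₀) (hq₁ : R.Fib q₁)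
    (j : y₀ ⟶ y₁) (hj : Anodyne R.Fib j) (hjq : j ≫ q₁ = q₀)
    (σ : a ⟶ b) (i : x₀ ⟶ x₁) (hip : i ≫ p₁ = p₀)
    (u₀ : x₀ ⟶ y₀) (u₁ : x₁ ⟶ y₁)
    (sq₀ : IsPullback p₀ u₀ σ q₀) (sq₁ : IsPullback p₁ u₁ σ q₁)
    (hcomm : i ≫ u₁ = u₀ ≫ j) :
    Anodyne R.Fib i := by
  -- factor σ as an anodyne morphism followed by a fibration
  obtain ⟨c, s, t, hs, ht, hst⟩ := R.factor σ
  -- form the pullbacks z₀ = c ×_b y₀ and z₁ = c ×_b y₁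
  haveI := R.pullback_exists t q₀ hq₀
  haveI := R.pullback_exists t q₁ hq₁
  set r₀ : pullback t q₀ ⟶ c := pullback.fst t q₀
  set v₀ : pullback t q₀ ⟶ y₀ := pullback.snd t q₀
  set r₁ : pullback t q₁ ⟶ c := pullback.fst t q₁
  set v₁ : pullback t q₁ ⟶ y₁ := pullback.snd t q₁
  have pb₀ : IsPullback r₀ v₀ t q₀ := IsPullback.of_hasPullback t q₀
  have pb₁ : IsPullback r₁ v₁ t q₁ := IsPullback.of_hasPullback t q₁
  have hr₀ : R.Fib r₀ := R.fib_stable pb₀ hq₀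
  have hr₁ : R.Fib r₁ := R.fib_stable pb₁ hq₁
  have hv₁ : R.Fib v₁ := R.fib_stable pb₁.flip ht
  -- induced map k : z₀ ⟶ z₁
  have hkc : r₀ ≫ t = (v₀ ≫ j) ≫ q₁ := by
    rw [Category.assoc, hjq]; exact pb₀.w
  set k : pullback t q₀ ⟶ pullback t q₁ := pullback.lift r₀ (v₀ ≫ j) hkc with hk
  have hkr : k ≫ r₁ = r₀ := by rw [hk]; exact pullback.lift_fst _ _ _
  have hkv : k ≫ v₁ = v₀ ≫ j := by rw [hk]; exact pullback.lift_snd _ _ _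
  -- k is the pullback of j along the fibration v₁, hence anodyne
  have sqk : IsPullback v₀ k j v₁ := by
    refine IsPullback.of_bot ?_ hkv.symm pb₁.flip
    rw [hkr, hjq]
    exact pb₀.flip
  have hkano : Anodyne R.Fib k := R.anodyne_stable sqk hj hv₁
  -- induced map m₀ : x₀ ⟶ z₀
  have hm₀c : (p₀ ≫ s) ≫ t = u₀ ≫ q₀ := by
    rw [Category.assoc, hst]; exact sq₀.w
  set m₀ : x₀ ⟶ pullback t q₀ := pullback.lift (p₀ ≫ s) u₀ hm₀c with hm₀
  have hm₀r : m₀ ≫ r₀ = p₀ ≫ s := by rw [hm₀]; exact pullback.lift_fst _ _ _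
  have hm₀v : m₀ ≫ v₀ = u₀ := by rw [hm₀]; exact pullback.lift_snd _ _ _
  -- m₀ is the pullback of the anodyne s along the fibration r₀, hence anodyne
  have sqm₀ : IsPullback p₀ m₀ s r₀ := by
    refine IsPullback.of_bot ?_ hm₀r.symm pb₀
    rw [hm₀v, hst]
    exact sq₀
  have hm₀ano : Anodyne R.Fib m₀ := R.anodyne_stable sqm₀ hs hr₀
  -- induced map m₁ : x₁ ⟶ z₁
  have hm₁c : (p₁ ≫ s) ≫ t = u₁ ≫ q₁ := by
    rw [Category.assoc, hst]; exact sq₁.w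
  set m₁ : x₁ ⟶ pullback t q₁ := pullback.lift (p₁ ≫ s) u₁ hm₁c with hm₁
  have hm₁r : m₁ ≫ r₁ = p₁ ≫ s := by rw [hm₁]; exact pullback.lift_fst _ _ _
  have hm₁v : m₁ ≫ v₁ = u₁ := by rw [hm₁]; exact pullback.lift_snd _ _ _
  have sqm₁ : IsPullback p₁ m₁ s r₁ := by
    refine IsPullback.of_bot ?_ hm₁r.symm pb₁
    rw [hm₁v, hst]
    exact sq₁
  have hm₁ano : Anodyne R.Fib m₁ := R.anodyne_stable sqm₁ hs hr₁
  -- i ≫ m₁ = m₀ ≫ k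
  have key : i ≫ m₁ = m₀ ≫ k := by
    apply pb₁.hom_ext
    · rw [Category.assoc, Category.assoc, hm₁r, hkr, ← Category.assoc, hip, hm₀r]
    · rw [Category.assoc, Category.assoc, hm₁v, hkv, ← Category.assoc, hcomm, hm₀v]
  -- conclude by cancellation
  have : Anodyne R.Fib (i ≫ m₁) := by
    rw [key]; exact anodyne_comp hm₀ano hkano
  exact anodyne_cancel R hm₁ano this
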